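/- Let (G_n) be a sequence of functions ℂ → ℂ such that each G_n is continuous on the closed strip 𝒯¹, holomorphic on its interior, and bounded on 𝒯¹. If the sequence (G_n) is uniformly Cauchy on the boundary ℝ ∪ (ℝ + i) of the strip, then (G_n) converges uniformly on all of 𝒯¹, and the limit function G is continuous on 𝒯¹ and holomorphic on the interior of 𝒯¹. -/

import Mathlib

open Filter Topology

/-- Phragmén–Lindelöf plus Weierstrass convergence on the closed strip
`𝒯¹ = {z ∈ ℂ : 0 ≤ Im z ≤ 1}`: if a sequence of functions, each continuous on `𝒯¹`,
holomorphic on its interior and bounded on `𝒯¹`, is uniformly Cauchy on the boundary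
`ℝ ∪ (ℝ + i)`, then it converges uniformly on all of `𝒯¹` to a function which is
continuous on `𝒯¹` and holomorphic on the interior of `𝒯¹`. -/
theorem strip_uniform_limit_of_uniformCauchy_on_boundary
    (G : ℕ → ℂ → ℂ)
    (hcont : ∀ n, ContinuousOn (G n) {z : ℂ | 0 ≤ z.im ∧ z.im ≤ 1})
    (hdiff : ∀ n, DifferentiableOn ℂ (G n) {z : ℂ | 0 < z.im ∧ z.im < 1})
    (hbdd : ∀ n, ∃ M : ℝ, ∀ z ∈ {z : ℂ | 0 ≤ z.im ∧ z.im ≤ 1}, ‖G n z‖ ≤ M)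
    (hcauchy : UniformCauchySeqOn G atTop {z : ℂ | z.im = 0 ∨ z.im = 1}) :
    ∃ g : ℂ → ℂ,
      TendstoUniformlyOn G g atTop {z : ℂ | 0 ≤ z.im ∧ z.im ≤ 1} ∧
      ContinuousOn g {z : ℂ | 0 ≤ z.im ∧ z.im ≤ 1} ∧
      DifferentiableOn ℂ g {z : ℂ | 0 < z.im ∧ z.im < 1} := by
  set S : Set ℂ := {z : ℂ | 0 ≤ z.im ∧ z.im ≤ 1} with hS
  set U : Set ℂ := {z : ℂ | 0 < z.im ∧ z.im < 1} with hU
  have hUopen : IsOpen U := by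
    have : U = Complex.im ⁻¹' Set.Ioo 0 1 := rfl
    rw [this]; exact isOpen_Ioo.preimage Complex.continuous_im
  have hUS : U ⊆ S := fun z hz => ⟨hz.1.le, hz.2.le⟩
  have hUeq : U = Complex.im ⁻¹' Set.Ioo (0:ℝ) 1 := rfl
  have hclUS : closure (Complex.im ⁻¹' Set.Ioo (0:ℝ) 1) ⊆ S := by
    have : IsClosed S := by
      have : S = Complex.im ⁻¹' Set.Icc 0 1 := rfl
      rw [this]; exact isClosed_Icc.preimage Complex.continuous_im
    exact this.closure_subset_iff.2 (by rw [← hUeq]; exact hUS)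
  -- uniform Cauchy on the whole strip via Phragmén–Lindelöf
  have hcauchyS : UniformCauchySeqOn G atTop S := by
    rw [Metric.uniformCauchySeqOn_iff] at hcauchy ⊢
    intro ε hε
    obtain ⟨N, hN⟩ := hcauchy (ε / 2) (by linarith)
    refine ⟨N, fun m hm n hn z hz => ?_⟩
    have key : ‖G m z - G n z‖ ≤ ε / 2 := by
      obtain ⟨Mm, hMm⟩ := hbdd m
      obtain ⟨Mn, hMn⟩ := hbdd n
      refine PhragmenLindelof.horizontal_strip
        (f := fun z => G m z - G n z) (a := 0) (b := 1) (C := ε / 2)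
        ⟨((hdiff m).sub (hdiff n)), (((hcont m).sub (hcont n)).mono hclUS)⟩
        ⟨1, by rw [sub_zero, div_one]; linarith [Real.pi_gt_three], max (Mm + Mn) 0, ?_⟩
        (fun w hw => ?_) (fun w hw => ?_) hz.1 hz.2
      · refine Asymptotics.IsBigO.of_bound (max (Mm + Mn) 0 + 1) ?_
        refine Filter.eventually_inf_principal.2 (Filter.Eventually.of_forall fun w hw => ?_)
        have hwS : w ∈ S := hUS hw
        have h1 : ‖G m w - G n w‖ ≤ Mm + Mn := by
          calc ‖G m w - G n w‖ ≤ ‖G m w‖ + ‖G n w‖ := norm_sub_le _ _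
          _ ≤ Mm + Mn := add_le_add (hMm w hwS) (hMn w hwS)
        have h2 : (1:ℝ) ≤ Real.exp (max (Mm + Mn) 0 * Real.exp (1 * |w.re|)) := by
          rw [← Real.exp_zero]
          exact Real.exp_le_exp.2 (mul_nonneg (le_max_right _ _) (Real.exp_pos _).le)
        rw [Real.norm_eq_abs, Real.abs_exp]
        have hC1 : (1:ℝ) ≤ max (Mm + Mn) 0 + 1 := by simp [le_max_right]
        calc ‖G m w - G n w‖ ≤ Mm + Mn := h1
        _ ≤ max (Mm + Mn) 0 + 1 := by simp [le_max_left, le_add_of_le_of_nonneg, (le_max_left (Mm+Mn) 0).trans (le_add_of_nonneg_right zero_le_one)]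
        _ = (max (Mm + Mn) 0 + 1) * 1 := (mul_one _).symm
        _ ≤ (max (Mm + Mn) 0 + 1) * Real.exp (max (Mm + Mn) 0 * Real.exp (1 * |w.re|)) := by
            exact mul_le_mul_of_nonneg_left h2 (by linarith)
      · have := hN m hm n hn w (Or.inl hw)
        rw [dist_eq_norm] at this; exact this.le
      · have := hN m hm n hn w (Or.inr hw)
        rw [dist_eq_norm] at this; exact this.le
    calc dist (G m z) (G n z) = ‖G m z - G n z‖ := dist_eq_norm _ _
    _ ≤ ε / 2 := key
    _ < ε := by linarith
  -- pointwise limits exist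
  have hpt : ∀ z ∈ S, ∃ l : ℂ, Tendsto (fun n => G n z) atTop (𝓝 l) := by
    intro z hz
    have : CauchySeq (fun n => G n z) := by
      rw [Metric.cauchySeq_iff]
      intro ε hε
      rw [Metric.uniformCauchySeqOn_iff] at hcauchyS
      obtain ⟨N, hN⟩ := hcauchyS ε hε
      exact ⟨N, fun m hm n hn => hN m hm n hn z hz⟩
    exact cauchySeq_tendsto_of_complete this
  choose! g hg using hpt
  have htu : TendstoUniformlyOn G g atTop S :=
    hcauchyS.tendstoUniformlyOn_of_tendsto hg
  refine ⟨g, htu, htu.continuousOn (Filter.Eventually.of_forall hcont).frequently, ?_⟩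
  have htlu : TendstoLocallyUniformlyOn G g atTop U :=
    (htu.tendstoLocallyUniformlyOn).mono hUS
  exact htlu.differentiableOn (Filter.Eventually.of_forall hdiff) hUopen
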